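/- Let N_n be the stoichiometric matrix of the reduced strongly irreversible n-site phosphorylation network. Define E_n ∈ ℝ^{4n×n} to be the block diagonal matrix with n diagonal blocks each equal to the column vector (1,1,1,1)ᵀ ∈ ℝ^4. Then the columns E_n^(1),…,E_n^(n) of E_n form a basis of ker(N_n), have pairwise disjoint supports, and constitute a choice of extreme vectors of the flux cone C = ker(N_n) ∩ ℝ^{4n}_{≥0}; i.e., every support-minimal nonzero vector of C is a positive multiple of some column of E_n. -/

import Mathlib

open Matrix

namespace Strongly

variable (K : Type*) [CommRing K]

/-- `P₁` block (with `3n+3` rows, as used in forming `N_{n+1}`): nonzero rows are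
row 1 = (−1,1,0,0), row 2 = (0,0,−1,1) and the last row = (−1,0,0,1). -/
def P1 (n : ℕ) : Matrix (Fin (3 * n + 3)) (Fin 4) K := fun i j =>
  if (i : ℕ) = 0 then ![(-1 : K), 1, 0, 0] j
  else if (i : ℕ) = 1 then ![(0 : K), 0, -1, 1] j
  else if (i : ℕ) = 3 * n + 2 then ![(-1 : K), 0, 0, 1] j
  else 0

def P2 : Matrix (Fin 3) (Fin 4) K :=
  !![1, -1, 0, 0; 0, 0, 1, -1; 0, 1, -1, 0]

/-- Stoichiometric matrices of the reduced strongly irreversible `n`-site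
phosphorylation networks: `N_{n+1} = [[N_n, P₁],[0, P₂]]` (and `N_0` is the empty
3×0 matrix, so that `N_1 = [P₁; P₂]`). -/
def Nmat : (n : ℕ) → Matrix (Fin (3 * n + 3)) (Fin (4 * n)) K
  | 0 => 0
  | n + 1 =>
      Matrix.reindex (finSumFinEquiv.trans (finCongr (by omega)))
        (finSumFinEquiv.trans (finCongr (by omega)))
        (Matrix.fromBlocks (Nmat n) (P1 K n) 0 (P2 K))

/-- `Q₁` block of the reactant matrix. -/
def Q1 (n : ℕ) : Matrix (Fin (3 * n + 3)) (Fin 4) K := fun i j =>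
  if (i : ℕ) = 0 then ![(1 : K), 0, 0, 0] j
  else if (i : ℕ) = 1 then ![(0 : K), 0, 1, 0] j
  else if (i : ℕ) = 3 * n + 2 then ![(1 : K), 0, 0, 0] j
  else 0

def Q2 : Matrix (Fin 3) (Fin 4) K :=
  !![0, 1, 0, 0; 0, 0, 0, 1; 0, 0, 1, 0]

/-- Reactant matrices: `A_{n+1} = [[A_n, Q₁],[0, Q₂]]`. -/
def Amat : (n : ℕ) → Matrix (Fin (3 * n + 3)) (Fin (4 * n)) K
  | 0 => 0
  | n + 1 =>
      Matrix.reindex (finSumFinEquiv.trans (finCongr (by omega)))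
        (finSumFinEquiv.trans (finCongr (by omega)))
        (Matrix.fromBlocks (Amat n) (Q1 K n) 0 (Q2 K))

/-- Conservation law matrix `W_n = [Id₃, W̄, …, W̄]` with `W̄ = [[1,0,0],[0,1,0],[1,1,1]]`. -/
def Wmat (n : ℕ) : Matrix (Fin 3) (Fin (3 * n + 3)) K := fun i j =>
  if (j : ℕ) < 3 then (if (i : ℕ) = (j : ℕ) then 1 else 0)
  else if (i : ℕ) = 2 then 1
  else if (i : ℕ) = ((j : ℕ) - 3) % 3 then 1 else 0

/-- Extreme matrix `E_n`: block diagonal with blocks `(1,1,1,1)ᵀ`. -/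
def Emat (n : ℕ) : Matrix (Fin (4 * n)) (Fin n) K := fun i k =>
  if (i : ℕ) / 4 = (k : ℕ) then 1 else 0

/-- Columns of `E_n`. -/
def Ecol (n : ℕ) : Fin n → Fin (4 * n) → K := fun k i =>
  if (i : ℕ) / 4 = (k : ℕ) then 1 else 0

/-- `N'_n`: the stoichiometric matrix with its first three rows removed. -/
def Nmat' (n : ℕ) : Matrix (Fin (3 * n)) (Fin (4 * n)) K :=
  (Nmat K n).submatrix (fun i => (⟨(i : ℕ) + 3, by have := i.isLt; omega⟩ : Fin (3 * n + 3))) id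

/-- `A'_n`: the reactant matrix with its first three rows removed. -/
def Amat' (n : ℕ) : Matrix (Fin (3 * n)) (Fin (4 * n)) K :=
  (Amat K n).submatrix (fun i => (⟨(i : ℕ) + 3, by have := i.isLt; omega⟩ : Fin (3 * n + 3))) id

/-- The square matrix `N'_n · diag(E_n λ) · A'ᵀ_n`. -/
def Csq (n : ℕ) (lam : Fin n → K) : Matrix (Fin (3 * n)) (Fin (3 * n)) K :=
  Nmat' K n * Matrix.diagonal ((Emat K n).mulVec lam) * (Amat' K n)ᵀ

/-- The matrix `N'_n · diag(E_n λ) · Aᵀ_n` of which `D_n` is a Gale dual. -/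
def Galemat (n : ℕ) (lam : Fin n → K) : Matrix (Fin (3 * n)) (Fin (3 * n + 3)) K :=
  Nmat' K n * Matrix.diagonal ((Emat K n).mulVec lam) * (Amat K n)ᵀ

/-- Gale dual matrix `D_n`, given by `D_nᵀ = [D^(0), D^(1), …, D^(n)]` with
`D^(0) = [[1,1,−1],[0,1,0],[0,0,1]]` and `D^(i) = [[0,0,−1],[−(i−1),−(i−1),−i],[1,1,1]]`. -/
def Dmat (n : ℕ) : Matrix (Fin (3 * n + 3)) (Fin 3) K := fun j c =>
  if (j : ℕ) < 3 then
    (if (c : ℕ) = 0 then (if (j : ℕ) = 2 then -1 else 1)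
     else if (c : ℕ) = 1 then (if (j : ℕ) = 1 then 1 else 0)
     else (if (j : ℕ) = 2 then 1 else 0))
  else
    (if (c : ℕ) = 0 then (if (j : ℕ) % 3 = 2 then -1 else 0)
     else if (c : ℕ) = 1 then
       (if (j : ℕ) % 3 = 2 then -(((j : ℕ) / 3 : ℕ) : K) else 1 - (((j : ℕ) / 3 : ℕ) : K))
     else 1)

end Strongly

open Strongly


def blk (n : ℕ) (i : Fin (4 * n)) : Fin n := ⟨(i : ℕ) / 4, by have := i.isLt; omega⟩

lemma P2_ker (u : Fin 4 → ℝ) : (P2 ℝ).mulVec u = 0 ↔ (u 1 = u 0 ∧ u 2 = u 0 ∧ u 3 = u 0) := by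
  constructor
  · intro h
    have h0 := congrFun h 0
    have h1 := congrFun h 1
    have h2 := congrFun h 2
    simp [P2, mulVec, dotProduct, Fin.sum_univ_four] at h0 h1 h2
    refine ⟨by linarith, by linarith, by linarith⟩
  · rintro ⟨a, b, c⟩
    funext i
    fin_cases i <;> simp [P2, mulVec, dotProduct, Fin.sum_univ_four] <;> linarith

lemma P1_const (n : ℕ) (c : ℝ) : (P1 ℝ n).mulVec (fun _ => c) = 0 := by
  funext i
  simp only [P1, mulVec, dotProduct, Fin.sum_univ_four, Pi.zero_apply]
  split_ifs <;> simp

lemma ker_iff (n : ℕ) (w : Fin (4 * n) → ℝ) :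
    (Nmat ℝ n).mulVec w = 0 ↔ ∃ c : Fin n → ℝ, ∀ i, w i = c (blk n i) := by
  induction n with
  | zero =>
      simp only [Nmat, Matrix.zero_mulVec, true_iff]
      exact ⟨fun i => i.elim0, fun i => absurd i.isLt (by omega)⟩
  | succ n ih =>
      set eC : Fin (4*n) ⊕ Fin 4 ≃ Fin (4*(n+1)) :=
        finSumFinEquiv.trans (finCongr (by omega : 4*n+4 = 4*(n+1))) with heC
      have heq : (Nmat ℝ (n+1)).mulVec w = 0 ↔
          (Matrix.fromBlocks (Nmat ℝ n) (P1 ℝ n) 0 (P2 ℝ)).mulVec (w ∘ eC) = 0 := by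
        rw [show Nmat ℝ (n+1) = Matrix.reindex (finSumFinEquiv.trans (finCongr (by omega)))
          (finSumFinEquiv.trans (finCongr (by omega)))
          (Matrix.fromBlocks (Nmat ℝ n) (P1 ℝ n) 0 (P2 ℝ)) from rfl]
        rw [Matrix.reindex_apply, Matrix.submatrix_mulVec_equiv]
        simp only [Equiv.symm_symm]
        constructor
        · intro h
          funext i
          have := congrFun h (((finSumFinEquiv.trans (finCongr (by omega : 3*n+3+3 = 3*(n+1)+3)))) i)
          simpa [heC] using this
        · intro h; rw [h]; rfl
      rw [heq, Matrix.fromBlocks_mulVec]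
      have hw : ∀ i : Fin (4*(n+1)), w i = (w ∘ eC) (eC.symm i) := by
        intro i; simp
      have hsplit : Sum.elim ((Nmat ℝ n).mulVec (w ∘ eC ∘ Sum.inl) + (P1 ℝ n).mulVec (w ∘ eC ∘ Sum.inr))
          ((0 : Matrix (Fin 3) (Fin (4*n)) ℝ).mulVec (w ∘ eC ∘ Sum.inl) + (P2 ℝ).mulVec (w ∘ eC ∘ Sum.inr)) = 0 ↔
          ((Nmat ℝ n).mulVec (w ∘ eC ∘ Sum.inl) + (P1 ℝ n).mulVec (w ∘ eC ∘ Sum.inr) = 0 ∧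
            (P2 ℝ).mulVec (w ∘ eC ∘ Sum.inr) = 0) := by
        rw [Matrix.zero_mulVec, zero_add]
        constructor
        · intro h
          constructor
          · funext j; exact congrFun h (Sum.inl j)
          · funext j; exact congrFun h (Sum.inr j)
        · rintro ⟨h1, h2⟩; funext j; cases j with
          | inl j => exact congrFun h1 j
          | inr j => exact congrFun h2 j
      rw [show (w ∘ ⇑eC) ∘ Sum.inl = w ∘ eC ∘ Sum.inl from rfl,
          show (w ∘ ⇑eC) ∘ Sum.inr = w ∘ eC ∘ Sum.inr from rfl] at *
      rw [hsplit]
      have hval_l : ∀ a : Fin (4*n), ((eC (Sum.inl a)) : ℕ) = (a : ℕ) := by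
        intro a
        rw [heC]
        simp only [Equiv.trans_apply, finSumFinEquiv_apply_left, finCongr_apply, Fin.coe_cast, Fin.coe_castAdd]
      have hval_r : ∀ b : Fin 4, ((eC (Sum.inr b)) : ℕ) = 4*n + (b : ℕ) := by
        intro b
        rw [heC]
        simp only [Equiv.trans_apply, finSumFinEquiv_apply_right, finCongr_apply, Fin.coe_cast, Fin.coe_natAdd]
      constructor
      · rintro ⟨h1, h2⟩
        obtain ⟨hu1, hu2, hu3⟩ := (P2_ker _).1 h2
        have hconst : (w ∘ eC ∘ Sum.inr) = fun _ => w (eC (Sum.inr 0)) := by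
          funext b
          match b with
          | 0 => rfl
          | 1 => exact hu1
          | 2 => exact hu2
          | 3 => exact hu3
        rw [hconst, P1_const, add_zero] at h1
        obtain ⟨c', hc'⟩ := (ih _).1 h1
        refine ⟨fun k => if h : (k : ℕ) < n then c' ⟨k, h⟩ else w (eC (Sum.inr 0)), ?_⟩
        intro i
        rcases hi : eC.symm i with a | b
        · have : i = eC (Sum.inl a) := by rw [← hi]; simp
          subst this
          have hv := hval_l a
          have ha := a.isLt
          have hlt : ((blk (n+1) (eC (Sum.inl a))) : ℕ) < n := by
            show ((eC (Sum.inl a)) : ℕ) / 4 < n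
            omega
          rw [show w (eC (Sum.inl a)) = c' (blk n a) from hc' a]
          show c' (blk n a) = dite _ _ _
          rw [dif_pos hlt]
          refine congrArg c' (Fin.ext ?_)
          show (a : ℕ) / 4 = ((eC (Sum.inl a)) : ℕ) / 4
          omega
        · have : i = eC (Sum.inr b) := by rw [← hi]; simp
          subst this
          have hv := hval_r b
          have hb := b.isLt
          have hnlt : ¬ ((blk (n+1) (eC (Sum.inr b))) : ℕ) < n := by
            show ¬ ((eC (Sum.inr b)) : ℕ) / 4 < n
            omega
          show w (eC (Sum.inr b)) = dite _ _ _
          rw [dif_neg hnlt]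
          exact congrFun hconst b
      · rintro ⟨c, hc⟩
        have hu : ∀ b : Fin 4, (w ∘ eC ∘ Sum.inr) b = c ⟨n, by omega⟩ := by
          intro b
          have hv := hval_r b
          have hb := b.isLt
          show w (eC (Sum.inr b)) = _
          rw [hc (eC (Sum.inr b))]
          refine congrArg c (Fin.ext ?_)
          show ((eC (Sum.inr b)) : ℕ) / 4 = n
          omega
        have hconst : (w ∘ eC ∘ Sum.inr) = fun _ => c ⟨n, by omega⟩ := funext hu
        refine ⟨?_, ?_⟩
        · rw [hconst, P1_const, add_zero]
          rw [ih _]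
          refine ⟨fun k => c ⟨k, by omega⟩, ?_⟩
          intro j
          show w (eC (Sum.inl j)) = _
          rw [hc (eC (Sum.inl j))]
          refine congrArg c (Fin.ext ?_)
          have hv := hval_l j
          have := j.isLt
          show ((eC (Sum.inl j)) : ℕ) / 4 = (j : ℕ) / 4
          omega
        · rw [hconst]; rw [P2_ker]; exact ⟨rfl, rfl, rfl⟩


lemma Ecol_apply (n : ℕ) (k : Fin n) (i : Fin (4 * n)) :
    Ecol ℝ n k i = if blk n i = k then 1 else 0 := by
  by_cases h : blk n i = k
  · rw [if_pos h]
    have h' : (i : ℕ) / 4 = (k : ℕ) := by rw [← h]; rfl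
    simp [Ecol, h']
  · rw [if_neg h]
    have h' : ¬ (i : ℕ) / 4 = (k : ℕ) := fun hh => h (Fin.ext hh)
    simp [Ecol, h']

lemma sum_smul_Ecol (n : ℕ) (c : Fin n → ℝ) (i : Fin (4 * n)) :
    (∑ k, c k • Ecol ℝ n k) i = c (blk n i) := by
  rw [Finset.sum_apply, Finset.sum_eq_single (blk n i)]
  · simp [Ecol_apply]
  · intro b _ hb
    simp [Ecol_apply, Ne.symm hb]
  · intro h; exact absurd (Finset.mem_univ _) h

lemma span_iff (n : ℕ) (w : Fin (4 * n) → ℝ) :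
    w ∈ Submodule.span ℝ (Set.range (Ecol ℝ n)) ↔ ∃ c : Fin n → ℝ, ∀ i, w i = c (blk n i) := by
  rw [Submodule.mem_span_range_iff_exists_fun]
  constructor
  · rintro ⟨c, hc⟩
    exact ⟨c, fun i => by rw [← hc, sum_smul_Ecol]⟩
  · rintro ⟨c, hc⟩
    exact ⟨c, funext fun i => by rw [sum_smul_Ecol, hc]⟩

lemma blk_mk (n : ℕ) (k : Fin n) (h : 4 * (k : ℕ) < 4 * n) :
    blk n ⟨4 * (k : ℕ), h⟩ = k := by
  refine Fin.ext ?_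
  show (4 * (k : ℕ)) / 4 = (k : ℕ)
  omega

lemma Ecol_ker (n : ℕ) (k : Fin n) : (Nmat ℝ n).mulVec (Ecol ℝ n k) = 0 := by
  rw [ker_iff]
  exact ⟨fun j => if j = k then 1 else 0, fun i => Ecol_apply n k i⟩

lemma Ecol_nonneg (n : ℕ) (k : Fin n) (i : Fin (4 * n)) : 0 ≤ Ecol ℝ n k i := by
  rw [Ecol_apply]; split_ifs <;> norm_num

theorem stmt9 (n : ℕ) (hn : 1 ≤ n) :
    LinearIndependent ℝ (Ecol ℝ n) ∧
    (∀ w : Fin (4 * n) → ℝ,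
        (Nmat ℝ n).mulVec w = 0 ↔ w ∈ Submodule.span ℝ (Set.range (Ecol ℝ n))) ∧
    (∀ k k' : Fin n, k ≠ k' → ∀ i, Ecol ℝ n k i ≠ 0 → Ecol ℝ n k' i = 0) ∧
    (∀ k : Fin n,
        (Nmat ℝ n).mulVec (Ecol ℝ n k) = 0 ∧ (∀ i, 0 ≤ Ecol ℝ n k i) ∧
        (∀ w : Fin (4 * n) → ℝ, w ≠ 0 → (Nmat ℝ n).mulVec w = 0 → (∀ i, 0 ≤ w i) →
            {i | w i ≠ 0} ⊆ {i | Ecol ℝ n k i ≠ 0} →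
            {i | w i ≠ 0} = {i | Ecol ℝ n k i ≠ 0})) ∧
    (∀ w : Fin (4 * n) → ℝ, w ≠ 0 → (Nmat ℝ n).mulVec w = 0 → (∀ i, 0 ≤ w i) →
        (∀ v : Fin (4 * n) → ℝ, v ≠ 0 → (Nmat ℝ n).mulVec v = 0 → (∀ i, 0 ≤ v i) →
            {i | v i ≠ 0} ⊆ {i | w i ≠ 0} → {i | v i ≠ 0} = {i | w i ≠ 0}) →
        ∃ (k : Fin n) (c : ℝ), 0 < c ∧ w = c • Ecol ℝ n k) := by
  refine ⟨?_, ?_, ?_, ?_, ?_⟩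
  · rw [Fintype.linearIndependent_iff]
    intro g hg k
    have h4 : 4 * (k : ℕ) < 4 * n := by have := k.isLt; omega
    have h2 := sum_smul_Ecol n g ⟨4 * (k : ℕ), h4⟩
    rw [hg, blk_mk] at h2
    simpa using h2.symm
  · intro w
    rw [ker_iff, span_iff]
  · intro k k' hkk' i hik
    have h1 : blk n i = k := by
      by_contra h
      rw [Ecol_apply, if_neg h] at hik
      exact hik rfl
    rw [Ecol_apply]
    exact if_neg (fun hh => hkk' (h1.symm.trans hh))
  · intro k
    refine ⟨Ecol_ker n k, Ecol_nonneg n k, ?_⟩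
    intro w hw0 hwker hwpos hsub
    obtain ⟨c, hc⟩ := (ker_iff n w).1 hwker
    have hcz : ∀ j : Fin n, j ≠ k → c j = 0 := by
      intro j hj
      have h4 : 4 * (j : ℕ) < 4 * n := by have := j.isLt; omega
      have hE : Ecol ℝ n k ⟨4 * (j : ℕ), h4⟩ = 0 := by
        rw [Ecol_apply, blk_mk, if_neg hj]
      have hwz : w ⟨4 * (j : ℕ), h4⟩ = 0 := by
        by_contra hne
        exact (hsub hne) hE
      have := hc ⟨4 * (j : ℕ), h4⟩
      rw [hwz, blk_mk] at this
      exact this.symm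
    have hck : c k ≠ 0 := by
      intro h0
      apply hw0
      funext i
      rw [hc i]
      by_cases hj : blk n i = k
      · rw [hj, h0]; rfl
      · rw [hcz _ hj]; rfl
    ext i
    simp only [Set.mem_setOf_eq]
    constructor
    · intro h
      have hb : blk n i = k := by
        by_contra hb
        exact h (by rw [hc i, hcz _ hb])
      rw [Ecol_apply, if_pos hb]
      norm_num
    · intro h
      have hb : blk n i = k := by
        by_contra hb
        rw [Ecol_apply, if_neg hb] at h
        exact h rfl
      rw [hc i, hb]
      exact hck
  · intro w hw0 hwker hwpos hmin
    obtain ⟨c, hc⟩ := (ker_iff n w).1 hwker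
    have hex : ∃ k, c k ≠ 0 := by
      by_contra h
      push_neg at h
      apply hw0
      funext i
      rw [hc i, h]
      rfl
    obtain ⟨k, hk⟩ := hex
    have h4 : 4 * (k : ℕ) < 4 * n := by have := k.isLt; omega
    have hpos : 0 < c k := by
      have := hwpos ⟨4 * (k : ℕ), h4⟩
      rw [hc _, blk_mk] at this
      exact lt_of_le_of_ne this (Ne.symm hk)
    refine ⟨k, c k, hpos, ?_⟩
    have hE0 : Ecol ℝ n k ≠ 0 := by
      intro h
      have := congrFun h ⟨4 * (k : ℕ), h4⟩
      rw [Ecol_apply, blk_mk, if_pos rfl] at this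
      simpa using this
    have hsub : {i | Ecol ℝ n k i ≠ 0} ⊆ {i | w i ≠ 0} := by
      intro i hi
      simp only [Set.mem_setOf_eq] at hi ⊢
      have hb : blk n i = k := by
        by_contra hb
        rw [Ecol_apply, if_neg hb] at hi
        exact hi rfl
      rw [hc i, hb]
      exact hk
    have hsupp := hmin (Ecol ℝ n k) hE0 (Ecol_ker n k) (Ecol_nonneg n k) hsub
    funext i
    simp only [Pi.smul_apply, smul_eq_mul]
    by_cases hb : blk n i = k
    · rw [Ecol_apply, if_pos hb, mul_one, hc i, hb]
    · have hi : Ecol ℝ n k i = 0 := by rw [Ecol_apply, if_neg hb]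
      have hwi : w i = 0 := by
        by_contra h
        have hmem : i ∈ {i | Ecol ℝ n k i ≠ 0} := by rw [hsupp]; exact h
        exact hmem hi
      rw [hwi, hi, mul_zero]
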